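/- Let G be a torsion-free abelian group and let A, B be finite nonempty multisets with elements in G. If A + A = B + B (pairwise-sum multisets), then A = B. -/

import Mathlib

/-- Pairwise sum of multisets over an additive group. -/
def pSum {G : Type*} [AddCommGroup G] (A B : Multiset G) : Multiset G :=
  (A.product B).map fun p => p.1 + p.2

section Lemmas

variable {G : Type*} [AddCommGroup G]

theorem pSum_def (A B : Multiset G) :
    pSum A B = (A ×ˢ B).map (fun p => p.1 + p.2) := rfl

theorem mem_pSum {A B : Multiset G} {x : G} :
    x ∈ pSum A B ↔ ∃ a ∈ A, ∃ b ∈ B, a + b = x := by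
  simp [pSum_def, Multiset.mem_product, and_assoc]

theorem pSum_add_left (s t u : Multiset G) :
    pSum (s + t) u = pSum s u + pSum t u := by
  rw [pSum_def, pSum_def, pSum_def, Multiset.add_product, Multiset.map_add]

theorem pSum_add_right (s t u : Multiset G) :
    pSum s (t + u) = pSum s t + pSum s u := by
  rw [pSum_def, pSum_def, pSum_def, Multiset.product_add, Multiset.map_add]

theorem pSum_cons (a : G) (A B : Multiset G) :
    pSum (a ::ₘ A) B = B.map (a + ·) + pSum A B := by
  rw [pSum_def, pSum_def, Multiset.cons_product, Multiset.map_add, Multiset.map_map]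
  rfl

theorem pSum_eq_zero_iff {A B : Multiset G} : pSum A B = 0 ↔ A = 0 ∨ B = 0 := by
  rw [← Multiset.card_eq_zero, pSum_def, Multiset.card_map, Multiset.card_product,
    Nat.mul_eq_zero, Multiset.card_eq_zero, Multiset.card_eq_zero]

theorem pSum_map {H : Type*} [AddCommGroup H] (f : G →+ H) (A B : Multiset G) :
    pSum (A.map f) (B.map f) = (pSum A B).map f := by
  induction A using Multiset.induction with
  | empty =>
    rw [Multiset.map_zero]
    rw [show pSum (0 : Multiset G) B = 0 from rfl,
      show pSum (0 : Multiset H) (B.map f) = 0 from rfl, Multiset.map_zero]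
  | cons a A ih =>
    rw [Multiset.map_cons, pSum_cons, pSum_cons, Multiset.map_add, ← ih,
      Multiset.map_map, Multiset.map_map]
    congr 1
    apply Multiset.map_congr rfl
    intro x _
    simp

/-- The key lemma for linearly ordered groups. -/
theorem aux_contr {L : Type*} [AddCommGroup L] [LinearOrder L] [IsOrderedAddMonoid L]
    (C A' B' : Multiset L) (m a : L) (hmC : m ∈ C) (hCm : ∀ c ∈ C, c ≤ m)
    (haA : a ∈ A') (ham : a ≤ m) (hB : ∀ y ∈ B', y < a)
    (E : pSum A' A' + pSum A' C + pSum C A' =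
         pSum B' B' + pSum B' C + pSum C B') : False := by
  have hmem : m + a ∈ pSum A' A' + pSum A' C + pSum C A' := by
    rw [Multiset.mem_add]
    exact Or.inr (mem_pSum.2 ⟨m, hmC, a, haA, rfl⟩)
  rw [E] at hmem
  simp only [Multiset.mem_add] at hmem
  rcases hmem with (h1 | h1) | h1
  · obtain ⟨y, hy, y', hy', hsum⟩ := mem_pSum.1 h1
    have : y + y' < m + a :=
      add_lt_add (lt_of_lt_of_le (hB y hy) ham) (hB y' hy')
    exact absurd hsum (ne_of_lt this)
  · obtain ⟨y, hy, c, hc, hsum⟩ := mem_pSum.1 h1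
    have : y + c < m + a := by
      calc y + c < a + m := add_lt_add_of_lt_of_le (hB y hy) (hCm c hc)
      _ = m + a := add_comm a m
    exact absurd hsum (ne_of_lt this)
  · obtain ⟨c, hc, y, hy, hsum⟩ := mem_pSum.1 h1
    have : c + y < m + a := add_lt_add_of_le_of_lt (hCm c hc) (hB y hy)
    exact absurd hsum (ne_of_lt this)

theorem multiset_halving_ordered {L : Type*} [AddCommGroup L] [LinearOrder L] [IsOrderedAddMonoid L]
    (A B : Multiset L) (hA : A ≠ 0) (hB : B ≠ 0)
    (h : pSum A A = pSum B B) : A = B := by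
  -- maxima agree
  have hAne : A.toFinset.Nonempty := by
    rcases Multiset.exists_mem_of_ne_zero hA with ⟨x, hx⟩
    exact ⟨x, Multiset.mem_toFinset.2 hx⟩
  have hBne : B.toFinset.Nonempty := by
    rcases Multiset.exists_mem_of_ne_zero hB with ⟨x, hx⟩
    exact ⟨x, Multiset.mem_toFinset.2 hx⟩
  set mA := A.toFinset.max' hAne with hmA
  set mB := B.toFinset.max' hBne with hmB
  have hmAA : mA ∈ A := Multiset.mem_toFinset.1 (A.toFinset.max'_mem hAne)
  have hmBB : mB ∈ B := Multiset.mem_toFinset.1 (B.toFinset.max'_mem hBne)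
  have hAle : ∀ x ∈ A, x ≤ mA := fun x hx =>
    A.toFinset.le_max' x (Multiset.mem_toFinset.2 hx)
  have hBle : ∀ x ∈ B, x ≤ mB := fun x hx =>
    B.toFinset.le_max' x (Multiset.mem_toFinset.2 hx)
  have hmax : mA = mB := by
    have h1 : mA + mA ∈ pSum B B := by rw [← h]; exact mem_pSum.2 ⟨mA, hmAA, mA, hmAA, rfl⟩
    have h2 : mB + mB ∈ pSum A A := by rw [h]; exact mem_pSum.2 ⟨mB, hmBB, mB, hmBB, rfl⟩
    obtain ⟨b1, hb1, b2, hb2, hs1⟩ := mem_pSum.1 h1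
    obtain ⟨a1, ha1, a2, ha2, hs2⟩ := mem_pSum.1 h2
    have le1 : mA + mA ≤ mB + mB := hs1 ▸ add_le_add (hBle b1 hb1) (hBle b2 hb2)
    have le2 : mB + mB ≤ mA + mA := hs2 ▸ add_le_add (hAle a1 ha1) (hAle a2 ha2)
    have : mA + mA = mB + mB := le_antisymm le1 le2
    by_contra hne
    rcases lt_or_gt_of_ne hne with hlt | hlt
    · exact absurd this (ne_of_lt (add_lt_add hlt hlt))
    · exact absurd this.symm (ne_of_lt (add_lt_add hlt hlt))
  set C := A ∩ B with hC
  set A' := A - B with hA'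
  set B' := B - A with hB'
  have hAdecomp : A' + C = A := Multiset.sub_add_inter A B
  have hBdecomp : B' + C = B := by
    rw [hB', hC, Multiset.inter_comm]; exact Multiset.sub_add_inter B A
  have hmC : mA ∈ C := Multiset.mem_inter.2 ⟨hmAA, hmax ▸ hmBB⟩
  have hCm : ∀ c ∈ C, c ≤ mA := fun c hc => hAle c (Multiset.mem_inter.1 hc).1
  -- the cancelled equation
  have E : pSum A' A' + pSum A' C + pSum C A' =
           pSum B' B' + pSum B' C + pSum C B' := by
    have := h
    rw [← hAdecomp, ← hBdecomp] at this
    rw [pSum_add_left, pSum_add_right, pSum_add_right, pSum_add_left,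
        pSum_add_right, pSum_add_right] at this
    simp only [← add_assoc] at this
    exact add_right_cancel this
  -- show A' = 0 and B' = 0
  by_cases hA'0 : A' = 0
  · have hz : pSum A' A' + pSum A' C + pSum C A' = 0 := by
      rw [hA'0]; simp [pSum_def, Multiset.zero_product, Multiset.product_zero]
    have h0 : pSum B' B' + pSum B' C + pSum C B' = 0 := by rw [← E]; exact hz
    have hBB0 : pSum B' B' = 0 := Multiset.le_zero.1 (h0 ▸
      (Multiset.le_add_right _ _).trans (Multiset.le_add_right _ _))
    have hB'0 : B' = 0 := (pSum_eq_zero_iff.1 hBB0).elim id id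
    rw [← hAdecomp, ← hBdecomp, hA'0, hB'0]
  · -- both nonzero: derive contradiction
    exfalso
    have hB'0 : B' ≠ 0 := by
      intro hB'z
      have hz : pSum B' B' + pSum B' C + pSum C B' = 0 := by
        rw [hB'z]; simp [pSum_def, Multiset.zero_product, Multiset.product_zero]
      have h0 : pSum A' A' + pSum A' C + pSum C A' = 0 := by rw [E]; exact hz
      have hAA0 : pSum A' A' = 0 := Multiset.le_zero.1 (h0 ▸
        (Multiset.le_add_right _ _).trans (Multiset.le_add_right _ _))
      exact hA'0 ((pSum_eq_zero_iff.1 hAA0).elim id id)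
    have hA'ne : A'.toFinset.Nonempty := by
      rcases Multiset.exists_mem_of_ne_zero hA'0 with ⟨x, hx⟩
      exact ⟨x, Multiset.mem_toFinset.2 hx⟩
    have hB'ne : B'.toFinset.Nonempty := by
      rcases Multiset.exists_mem_of_ne_zero hB'0 with ⟨x, hx⟩
      exact ⟨x, Multiset.mem_toFinset.2 hx⟩
    set a := A'.toFinset.max' hA'ne with ha
    set b := B'.toFinset.max' hB'ne with hb
    have haA' : a ∈ A' := Multiset.mem_toFinset.1 (A'.toFinset.max'_mem hA'ne)
    have hbB' : b ∈ B' := Multiset.mem_toFinset.1 (B'.toFinset.max'_mem hB'ne)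
    have hA'le : ∀ x ∈ A', x ≤ a := fun x hx =>
      A'.toFinset.le_max' x (Multiset.mem_toFinset.2 hx)
    have hB'le : ∀ x ∈ B', x ≤ b := fun x hx =>
      B'.toFinset.le_max' x (Multiset.mem_toFinset.2 hx)
    have hne : a ≠ b := by
      intro he
      have h1 : A.count a > B.count a := by
        have := haA'
        rw [hA', ← Multiset.count_pos, Multiset.count_sub] at this
        omega
      have h2 : B.count a > A.count a := by
        have := he ▸ hbB'
        rw [hB', ← Multiset.count_pos, Multiset.count_sub] at this
        omega
      omega
    rcases lt_or_gt_of_ne hne with hlt | hlt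
    · -- a < b : swap roles
      exact aux_contr C B' A' mA b hmC hCm hbB'
        (hBle b (hBdecomp ▸ Multiset.mem_add.2 (Or.inl hbB')) |>.trans_eq hmax.symm)
        (fun y hy => lt_of_le_of_lt (hA'le y hy) hlt) E.symm
    · -- b < a
      exact aux_contr C A' B' mA a hmC hCm haA'
        (hAle a (hAdecomp ▸ Multiset.mem_add.2 (Or.inl haA')))
        (fun y hy => lt_of_le_of_lt (hB'le y hy) hlt) E

end Lemmas

theorem multiset_halving {G : Type*} [AddCommGroup G]
    (hG : ∀ g : G, g ≠ 0 → ¬IsOfFinAddOrder g)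
    (A B : Multiset G) (hA : A ≠ 0) (hB : B ≠ 0)
    (h : pSum A A = pSum B B) : A = B := by
  classical
  -- the subgroup generated by the elements of A and B
  set S := (A + B).toFinset with hS
  set H := AddSubgroup.closure (S : Set G) with hH
  -- lift A and B to multisets over H
  have hmemA : ∀ x ∈ A, x ∈ H := fun x hx =>
    AddSubgroup.subset_closure (by simp [hS, Multiset.mem_toFinset, hx])
  have hmemB : ∀ x ∈ B, x ∈ H := fun x hx =>
    AddSubgroup.subset_closure (by simp [hS, Multiset.mem_toFinset, hx])
  set A₀ : Multiset H := A.attach.map (fun x => (⟨x.1, hmemA x.1 x.2⟩ : H)) with hA₀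
  set B₀ : Multiset H := B.attach.map (fun x => (⟨x.1, hmemB x.1 x.2⟩ : H)) with hB₀
  have hA₀map : A₀.map (H.subtype) = A := by
    rw [hA₀, Multiset.map_map]
    exact (Multiset.attach_map_val' A _).trans (Multiset.map_id A) |>.symm ▸ by
      simp [Function.comp_def]
  have hB₀map : B₀.map (H.subtype) = B := by
    rw [hB₀, Multiset.map_map]
    simp [Function.comp_def]
  -- H is finitely generated torsion-free, hence free of finite rank
  have : AddGroup.FG H := hH ▸ AddGroup.closure_finset_fg S
  have : Module.Finite ℤ H := Module.Finite.iff_addGroup_fg.mpr this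
  have htf : IsAddTorsionFree H := isAddTorsionFree_iff_not_isOfFinAddOrder.mpr
    (fun x hx hfin => hG (x : G) (by simpa using hx) (H.subtype.isOfFinAddOrder hfin))
  have : NoZeroSMulDivisors ℤ H := IsAddTorsionFree.to_noZeroSMulDivisors_int
  have : Module.Free ℤ H := Module.free_of_finite_type_torsion_free'
  -- choose a basis indexed by Fin n
  let ι := Module.Free.ChooseBasisIndex ℤ H
  let bI : Module.Basis ι ℤ H := Module.Free.chooseBasis ℤ H
  let n := Fintype.card ι
  let b : Module.Basis (Fin n) ℤ H := bI.reindex (Fintype.equivFin ι)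
  -- embed H into the lexicographically ordered group Lex (Fin n →₀ ℤ)
  let L := Lex (Fin n →₀ ℤ)
  let φ : H →+ L :=
    { toFun := fun x => toLex (b.repr x)
      map_zero' := by simp
      map_add' := fun x y => by simp }
  have hφinj : Function.Injective φ := by
    intro x y hxy
    apply b.repr.injective
    exact toLex.injective hxy
  -- transfer the hypothesis
  have hsub : Function.Injective (H.subtype) := Subtype.val_injective
  have h₀ : pSum A₀ A₀ = pSum B₀ B₀ := by
    apply Multiset.map_injective hsub
    rw [← pSum_map H.subtype, ← pSum_map H.subtype, hA₀map, hB₀map, h]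
  have hφ : pSum (A₀.map φ) (A₀.map φ) = pSum (B₀.map φ) (B₀.map φ) := by
    rw [pSum_map, pSum_map, h₀]
  have hA₀ne : A₀ ≠ 0 := by
    intro h0
    apply hA
    rw [← hA₀map, h0, Multiset.map_zero]
  have hB₀ne : B₀ ≠ 0 := by
    intro h0
    apply hB
    rw [← hB₀map, h0, Multiset.map_zero]
  have hkey : A₀.map φ = B₀.map φ := by
    apply multiset_halving_ordered (L := L) _ _ _ _ hφ
    · simp [Multiset.map_eq_zero, hA₀ne]
    · simp [Multiset.map_eq_zero, hB₀ne]
  have : A₀ = B₀ := Multiset.map_injective hφinj hkey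
  rw [← hA₀map, ← hB₀map, this]
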